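/- Let β > 0, μ > 1, f ∈ E_{(β,μ)}, and set φ(m) = i m f(m). Then φ ∈ E_{(β,μ-1)}, and the derivative of the analytic extension of the inverse Fourier transform of f on the strip H_β equals the analytic extension of the inverse Fourier transform of φ: ∂_z F⁻¹(f)(z) = F⁻¹(φ)(z) for all z ∈ H_β. -/

import Mathlib

open MeasureTheory Real Complex

/-- Membership in the space `E_{(β,μ)}`: continuous functions with finite weighted sup norm. -/
def MemE (β μ : ℝ) (h : ℝ → ℂ) : Prop :=
  Continuous h ∧ BddAbove (Set.range fun m : ℝ =>
    (1 + |m|) ^ μ * Real.exp (β * |m|) * ‖h m‖)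

/-- The horizontal strip `H_β`. -/
def Hstrip (β : ℝ) : Set ℂ := {z : ℂ | |z.im| < β}

/-- The inverse Fourier transform at a real point. -/
noncomputable def invFourier (f : ℝ → ℂ) (x : ℝ) : ℂ :=
  (1 / Real.sqrt (2 * Real.pi)) * ∫ m : ℝ, f m * Complex.exp (Complex.I * x * m)

lemma myIntExp {b : ℝ} (hb : 0 < b) :
    Integrable (fun x : ℝ => Real.exp (-(b * |x|))) := by
  rw [← integrableOn_univ, ← @Set.Iio_union_Ici _ _ (0 : ℝ), integrableOn_union,
    integrableOn_Ici_iff_integrableOn_Ioi]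
  have h : IntegrableOn (fun x : ℝ => Real.exp (-(b * |x|))) (Set.Ioi 0) := by
    refine (exp_neg_integrableOn_Ioi 0 hb).congr_fun (fun x hx => ?_) measurableSet_Ioi
    rw [abs_of_pos hx]; ring_nf
  refine ⟨?_, h⟩
  rw [← (Measure.measurePreserving_neg (volume : Measure ℝ)).integrableOn_comp_preimage
      (Homeomorph.neg ℝ).measurableEmbedding]
  simpa [Function.comp_def, abs_neg] using h

/-- Let `f ∈ E_{(β,μ)}` with `β > 0`, `μ > 1`, and `φ(m) = i m f(m)`. Then
`φ ∈ E_{(β,μ-1)}`, and for any holomorphic extensions `F`, `G` of `F⁻¹(f)`, `F⁻¹(φ)`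
to the strip `H_β`, one has `F' = G` on `H_β`. -/
theorem stmt2 (β μ : ℝ) (hβ : 0 < β) (hμ : 1 < μ) (f : ℝ → ℂ) (hf : MemE β μ f)
    (φ : ℝ → ℂ) (hφdef : ∀ m : ℝ, φ m = Complex.I * m * f m) :
    MemE β (μ - 1) φ ∧
    ∀ F G : ℂ → ℂ,
      DifferentiableOn ℂ F (Hstrip β) → DifferentiableOn ℂ G (Hstrip β) →
      (∀ x : ℝ, F (x : ℂ) = invFourier f x) →
      (∀ x : ℝ, G (x : ℂ) = invFourier φ x) →
      ∀ z ∈ Hstrip β, deriv F z = G z := by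
  obtain ⟨hfc, C, hC⟩ := hf
  simp only [mem_upperBounds, Set.mem_range, forall_exists_index] at hC
  have hC' : ∀ m : ℝ, (1 + |m|) ^ μ * Real.exp (β * |m|) * ‖f m‖ ≤ C :=
    fun m => hC _ m rfl
  have hbase : ∀ m : ℝ, (1 : ℝ) ≤ 1 + |m| := fun m => by
    have := abs_nonneg m; linarith
  have hone : ∀ m : ℝ, (1 : ℝ) ≤ (1 + |m|) ^ μ := fun m =>
    Real.one_le_rpow (hbase m) (by linarith)
  have habs : ∀ m : ℝ, |m| ≤ (1 + |m|) ^ μ := fun m => by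
    have h1 : |m| ≤ 1 + |m| := by linarith [abs_nonneg m]
    calc |m| ≤ 1 + |m| := h1
      _ = (1 + |m|) ^ (1 : ℝ) := (Real.rpow_one _).symm
      _ ≤ (1 + |m|) ^ μ := Real.rpow_le_rpow_of_exponent_le (hbase m) hμ.le
  -- pointwise decay bounds
  have key_bd : ∀ m : ℝ, |m| * ‖f m‖ ≤ C * Real.exp (-(β * |m|)) := by
    intro m
    have hexp : (0 : ℝ) < Real.exp (β * |m|) := Real.exp_pos _
    have h2 : |m| * ‖f m‖ * Real.exp (β * |m|) ≤ C := by
      have := mul_le_mul_of_nonneg_right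
        (mul_le_mul_of_nonneg_right (habs m) (Real.exp_pos (β * |m|)).le)
        (norm_nonneg (f m))
      calc |m| * ‖f m‖ * Real.exp (β * |m|)
          = |m| * Real.exp (β * |m|) * ‖f m‖ := by ring
        _ ≤ (1 + |m|) ^ μ * Real.exp (β * |m|) * ‖f m‖ := this
        _ ≤ C := hC' m
    rw [Real.exp_neg, ← div_eq_mul_inv, le_div_iff₀ hexp]
    exact h2
  have f_bd : ∀ m : ℝ, ‖f m‖ ≤ C * Real.exp (-(β * |m|)) := by
    intro m
    have hexp : (0 : ℝ) < Real.exp (β * |m|) := Real.exp_pos _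
    have h2 : ‖f m‖ * Real.exp (β * |m|) ≤ C := by
      calc ‖f m‖ * Real.exp (β * |m|)
          = 1 * Real.exp (β * |m|) * ‖f m‖ := by ring
        _ ≤ (1 + |m|) ^ μ * Real.exp (β * |m|) * ‖f m‖ := by
            apply mul_le_mul_of_nonneg_right _ (norm_nonneg _)
            exact mul_le_mul_of_nonneg_right (hone m) hexp.le
        _ ≤ C := hC' m
    rw [Real.exp_neg, ← div_eq_mul_inv, le_div_iff₀ hexp]
    exact h2
  have hφabs : ∀ m : ℝ, ‖φ m‖ = |m| * ‖f m‖ := by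
    intro m
    rw [hφdef m, norm_mul, norm_mul, Complex.norm_I, Complex.norm_real, Real.norm_eq_abs, one_mul]
  -- Part 1 : φ ∈ E_{(β, μ-1)}
  have hφcont : Continuous φ := by
    have : φ = fun m : ℝ => Complex.I * m * f m := funext hφdef
    rw [this]
    exact (continuous_const.mul Complex.continuous_ofReal).mul hfc
  have part1 : MemE β (μ - 1) φ := by
    refine ⟨hφcont, C, ?_⟩
    rintro x ⟨m, rfl⟩
    show (1 + |m|) ^ (μ - 1) * Real.exp (β * |m|) * ‖φ m‖ ≤ C
    rw [hφabs m]
    have hpos : (0 : ℝ) < 1 + |m| := lt_of_lt_of_le one_pos (hbase m)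
    have hstep : (1 + |m|) ^ (μ - 1) * |m| ≤ (1 + |m|) ^ μ := by
      calc (1 + |m|) ^ (μ - 1) * |m| ≤ (1 + |m|) ^ (μ - 1) * (1 + |m|) := by
            apply mul_le_mul_of_nonneg_left (by linarith [abs_nonneg m])
            exact (Real.rpow_pos_of_pos hpos _).le
        _ = (1 + |m|) ^ (μ - 1 + 1) := (Real.rpow_add_one hpos.ne' _).symm
        _ = (1 + |m|) ^ μ := by ring_nf
    calc (1 + |m|) ^ (μ - 1) * Real.exp (β * |m|) * (|m| * ‖f m‖)
        = ((1 + |m|) ^ (μ - 1) * |m|) * Real.exp (β * |m|) * ‖f m‖ := by ring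
      _ ≤ (1 + |m|) ^ μ * Real.exp (β * |m|) * ‖f m‖ := by
          apply mul_le_mul_of_nonneg_right _ (norm_nonneg _)
          exact mul_le_mul_of_nonneg_right hstep (Real.exp_pos _).le
      _ ≤ C := hC' m
  refine ⟨part1, ?_⟩
  -- Part 2
  intro F G hF hG hFr hGr z hz
  have hopen : IsOpen (Hstrip β) := by
    have : Hstrip β = (fun z : ℂ => |z.im|) ⁻¹' Set.Iio β := rfl
    rw [this]
    exact isOpen_Iio.preimage (Complex.continuous_im.abs)
  have hmem : ∀ x : ℝ, (x : ℂ) ∈ Hstrip β := by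
    intro x
    simp only [Hstrip, Set.mem_setOf_eq, Complex.ofReal_im, abs_zero]
    exact hβ
  -- integrability facts
  have hbd_int : Integrable (fun m : ℝ => C * Real.exp (-(β * |m|))) :=
    (myIntExp hβ).const_mul C
  have hexp_cont : ∀ t : ℝ, Continuous fun m : ℝ =>
      Complex.exp (Complex.I * t * m) := by
    intro t
    exact Complex.continuous_exp.comp (continuous_const.mul Complex.continuous_ofReal)
  have habs_exp : ∀ t m : ℝ, ‖Complex.exp (Complex.I * t * m)‖ = 1 := by
    intro t m
    rw [Complex.norm_exp]
    simp
  have hFint : ∀ t : ℝ, Integrable fun m : ℝ => f m * Complex.exp (Complex.I * t * m) := by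
    intro t
    refine hbd_int.mono' ((hfc.mul (hexp_cont t)).aestronglyMeasurable) ?_
    filter_upwards with m
    rw [norm_mul, habs_exp t m, mul_one]
    exact f_bd m
  -- derivative under the integral sign
  have key : ∀ x : ℝ, HasDerivAt (fun t : ℝ => invFourier f t) (invFourier φ x) x := by
    intro x
    have main := hasDerivAt_integral_of_dominated_loc_of_deriv_le (μ := volume)
      (F := fun (t : ℝ) (m : ℝ) => f m * Complex.exp (Complex.I * t * m))
      (F' := fun (t : ℝ) (m : ℝ) =>
        f m * Complex.exp (Complex.I * t * m) * (Complex.I * m))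
      (bound := fun m : ℝ => C * Real.exp (-(β * |m|)))
      (x₀ := x) (Metric.ball_mem_nhds x one_pos)
      (Filter.Eventually.of_forall fun t => ((hfc.mul (hexp_cont t)).aestronglyMeasurable))
      (hFint x)
      (((hfc.mul (hexp_cont x)).mul
        (continuous_const.mul Complex.continuous_ofReal)).aestronglyMeasurable)
      ?_ hbd_int ?_
    · have hd := main.2
      have heq : (fun t : ℝ => invFourier f t) = fun t : ℝ =>
          ((1 : ℂ) / Real.sqrt (2 * Real.pi)) *
            ∫ m : ℝ, f m * Complex.exp (Complex.I * t * m) := by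
        funext t; rfl
      rw [heq]
      have := hd.const_mul ((1 : ℂ) / Real.sqrt (2 * Real.pi))
      refine this.congr_deriv ?_
      unfold invFourier
      congr 1
      apply integral_congr_ae
      filter_upwards with m
      rw [hφdef m]
      ring
    · filter_upwards with m t _
      rw [norm_mul, norm_mul,
        habs_exp t m, mul_one, norm_mul, Complex.norm_I,
        Complex.norm_real, Real.norm_eq_abs, one_mul, mul_comm]
      exact key_bd m
    · filter_upwards with m t _
      have h1 : HasDerivAt (fun z : ℂ => Complex.I * z * m) (Complex.I * m) (t : ℂ) := by
        simpa using ((hasDerivAt_id (t : ℂ)).const_mul Complex.I).mul_const (m : ℂ)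
      have h2 := (h1.cexp).const_mul (f m)
      have h3 := h2.comp_ofReal
      refine h3.congr_deriv ?_
      ring
  -- on real points, deriv F = G
  have hRe : ∀ x : ℝ, deriv F (x : ℂ) = G (x : ℂ) := by
    intro x
    have hdF : HasDerivAt F (deriv F (x : ℂ)) (x : ℂ) :=
      (hF.differentiableAt (hopen.mem_nhds (hmem x))).hasDerivAt
    have hcomp : HasDerivAt (fun t : ℝ => F (t : ℂ)) (deriv F (x : ℂ)) x :=
      hdF.comp_ofReal
    have heq : (fun t : ℝ => F (t : ℂ)) = fun t : ℝ => invFourier f t := funext hFr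
    rw [heq] at hcomp
    have := (key x).unique hcomp
    rw [hGr x, ← this]
  -- identity theorem
  have hAF : AnalyticOnNhd ℂ (deriv F) (Hstrip β) :=
    (hF.analyticOnNhd hopen).deriv
  have hAG : AnalyticOnNhd ℂ G (Hstrip β) := hG.analyticOnNhd hopen
  have hpre : IsPreconnected (Hstrip β) := by
    have hset : Hstrip β = Complex.im ⁻¹' Set.Ioo (-β) β := by
      ext w
      simp [Hstrip, Set.mem_Ioo, abs_lt]
    have hconv : Convex ℝ (Hstrip β) := by
      rw [hset]
      exact (convex_Ioo (-β) β).linear_preimage Complex.imLm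
    exact hconv.isPreconnected
  have h0 : (0 : ℂ) ∈ Hstrip β := by
    simp only [Hstrip, Set.mem_setOf_eq, Complex.zero_im, abs_zero]
    exact hβ
  have hfreq : ∃ᶠ w in nhdsWithin (0 : ℂ) {(0 : ℂ)}ᶜ, deriv F w = G w := by
    have hu : Filter.Tendsto (fun n : ℕ => ((1 / (n + 1) : ℝ) : ℂ)) Filter.atTop
        (nhdsWithin (0 : ℂ) {(0 : ℂ)}ᶜ) := by
      rw [nhdsWithin]
      refine Filter.tendsto_inf.mpr ⟨?_, ?_⟩
      · have : Filter.Tendsto (fun n : ℕ => (1 / (n + 1) : ℝ)) Filter.atTop (nhds 0) :=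
          tendsto_one_div_add_atTop_nhds_zero_nat
        have h2 := (Complex.continuous_ofReal.tendsto 0).comp this
        simpa [Function.comp_def, one_div] using h2
      · rw [Filter.tendsto_principal]
        filter_upwards with n
        simp only [Set.mem_compl_iff, Set.mem_singleton_iff]
        intro h
        rw [Complex.ofReal_eq_zero] at h
        have : (0 : ℝ) < 1 / (n + 1) := by positivity
        linarith [this.ne' h]
    exact hu.frequently ((Filter.Eventually.of_forall fun n => hRe _).frequently)
  exact hAF.eqOn_of_preconnected_of_frequently_eq hAG hpre h0 hfreq hz
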